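/- Let d_v ≥ 3 and let P be a J×L protograph that is (d_v,d_c)-regular (every column sums to d_v and every row sums to d_c) and avoids inevitable cycles of length less than 14, i.e., P contains none of the ICI patterns of length 6, 8, 10, or 12 (nor their transposes). Let n2 = n2(P) be the number of entries of P equal to 2. Then: (i) C(J−n2, 2) ≥ n2 · C(d_v−2, 2); and (ii) (J−n2)·d_c ≥ n2·(d_v−2). -/

import Mathlib

open Matrix Finset

/-- `P` has `Q` as a (row/column-permuted) entrywise sub-pattern. -/
def containsSub {J L m n : ℕ} (P : Matrix (Fin J) (Fin L) ℕ)
    (Q : Matrix (Fin m) (Fin n) ℕ) : Prop :=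
  ∃ r : Fin m → Fin J, ∃ c : Fin n → Fin L,
    Function.Injective r ∧ Function.Injective c ∧
    ∀ i j, Q i j ≤ P (r i) (c j)

/-- `P` contains the pattern `Q` or its transpose. -/
def containsPat {J L m n : ℕ} (P : Matrix (Fin J) (Fin L) ℕ)
    (Q : Matrix (Fin m) (Fin n) ℕ) : Prop :=
  containsSub P Q ∨ containsSub P Qᵀ

/-- ICI pattern of length 6. -/
def pat6 : Matrix (Fin 1) (Fin 1) ℕ := !![3]
/-- ICI pattern of length 8. -/
def pat8 : Matrix (Fin 1) (Fin 2) ℕ := !![2, 2]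
/-- ICI pattern of length 10. -/
def pat10 : Matrix (Fin 2) (Fin 2) ℕ := !![2, 1; 1, 1]
/-- First ICI pattern of length 12. -/
def pat12a : Matrix (Fin 2) (Fin 2) ℕ := !![2, 1; 0, 2]
/-- Second ICI pattern of length 12. -/
def pat12b : Matrix (Fin 2) (Fin 3) ℕ := !![2, 1, 1; 0, 1, 1]
/-- Third ICI pattern of length 12 (the 2×3 all-ones matrix). -/
def pat12c : Matrix (Fin 2) (Fin 3) ℕ := !![1, 1, 1; 1, 1, 1]

/-- `P` avoids inevitable cycles of length `< 10`. -/
def avoidsLt10 {J L : ℕ} (P : Matrix (Fin J) (Fin L) ℕ) : Prop :=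
  ¬ containsPat P pat6 ∧ ¬ containsPat P pat8

/-- `P` avoids inevitable cycles of length `< 12`. -/
def avoidsLt12 {J L : ℕ} (P : Matrix (Fin J) (Fin L) ℕ) : Prop :=
  avoidsLt10 P ∧ ¬ containsPat P pat10

/-- `P` avoids inevitable cycles of length `< 14`. -/
def avoidsLt14 {J L : ℕ} (P : Matrix (Fin J) (Fin L) ℕ) : Prop :=
  avoidsLt12 P ∧ ¬ containsPat P pat12a ∧ ¬ containsPat P pat12b ∧ ¬ containsPat P pat12c

/-- The number of entries of `P` equal to `2`. -/
def numTwos {J L : ℕ} (P : Matrix (Fin J) (Fin L) ℕ) : ℕ :=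
  (Finset.univ.filter (fun p : Fin J × Fin L => P p.1 p.2 = 2)).card

/-- `P` is `(d_v, d_c)`-regular: every column sums to `d_v`, every row to `d_c`. -/
def protoRegular {J L : ℕ} (P : Matrix (Fin J) (Fin L) ℕ) (dv dc : ℕ) : Prop :=
  (∀ l : Fin L, ∑ j : Fin J, P j l = dv) ∧ (∀ j : Fin J, ∑ l : Fin L, P j l = dc)

section Aux

variable {J L : ℕ} (P : Matrix (Fin J) (Fin L) ℕ)

lemma inj2 {α : Type*} {a b : α} (hab : a ≠ b) : Function.Injective ![a, b] := by
  intro i j h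
  fin_cases i <;> fin_cases j <;> simp_all

lemma inj3 {α : Type*} {a b c : α} (hab : a ≠ b) (hac : a ≠ c) (hbc : b ≠ c) :
    Function.Injective ![a, b, c] := by
  intro i j h
  fin_cases i <;> fin_cases j <;> simp_all

lemma aux_le2 (h6 : ¬ containsPat P pat6) : ∀ j l, P j l ≤ 2 := by
  intro j l
  by_contra h
  exact h6 (Or.inl ⟨![j], ![l], Function.injective_of_subsingleton _,
    Function.injective_of_subsingleton _, by
      intro i k
      fin_cases i; fin_cases k
      simpa [pat6] using by omega⟩)

lemma aux_row (h8 : ¬ containsPat P pat8) :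
    ∀ j (l l' : Fin L), l ≠ l' → 2 ≤ P j l → 2 ≤ P j l' → False := by
  intro j l l' hll h1 h2
  exact h8 (Or.inl ⟨![j], ![l, l'], Function.injective_of_subsingleton _, inj2 hll, by
    intro i k
    fin_cases i <;> fin_cases k <;> simpa [pat8] using by assumption⟩)

lemma aux_col (h8 : ¬ containsPat P pat8) :
    ∀ (j j' : Fin J) l, j ≠ j' → 2 ≤ P j l → 2 ≤ P j' l → False := by
  intro j j' l hjj h1 h2
  exact h8 (Or.inr ⟨![j, j'], ![l], inj2 hjj, Function.injective_of_subsingleton _, by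
    intro i k
    fin_cases i <;> fin_cases k <;> simpa [pat8] using by assumption⟩)

lemma aux_12a (h : ¬ containsPat P pat12a) :
    ∀ (j j' : Fin J) (l l' : Fin L), j ≠ j' → l ≠ l' →
      2 ≤ P j l → 1 ≤ P j' l → 2 ≤ P j' l' → False := by
  intro j j' l l' hjj hll h1 h2 h3
  refine h (Or.inl ⟨![j', j], ![l', l], inj2 (Ne.symm hjj), inj2 (Ne.symm hll), ?_⟩)
  intro i k
  fin_cases i <;> fin_cases k <;> simp [pat12a] <;> assumption

lemma aux_12b (h : ¬ containsPat P pat12b) :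
    ∀ (j j1 j2 : Fin J) (l l' : Fin L), j ≠ j1 → j ≠ j2 → j1 ≠ j2 → l ≠ l' →
      2 ≤ P j l → 1 ≤ P j1 l → 1 ≤ P j1 l' → 1 ≤ P j2 l → 1 ≤ P j2 l' → False := by
  intro j j1 j2 l l' h01 h02 h12 hll p0 p1 p2 p3 p4
  refine h (Or.inr ⟨![j, j1, j2], ![l, l'], inj3 h01 h02 h12, inj2 hll, ?_⟩)
  intro i k
  fin_cases i <;> fin_cases k <;> simp [pat12b] <;> assumption

end Aux

theorem stmt_11 {J L : ℕ} (dv dc : ℕ) (hdv : 3 ≤ dv)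
    (P : Matrix (Fin J) (Fin L) ℕ)
    (hreg : protoRegular P dv dc)
    (havoid : avoidsLt14 P) :
    Nat.choose (J - numTwos P) 2 ≥ numTwos P * Nat.choose (dv - 2) 2 ∧
    (J - numTwos P) * dc ≥ numTwos P * (dv - 2) := by
  obtain ⟨⟨⟨h6, h8⟩, _h10⟩, h12a, h12b, _h12c⟩ := havoid
  set T : Finset (Fin J × Fin L) :=
    Finset.univ.filter (fun p : Fin J × Fin L => P p.1 p.2 = 2) with hT
  have hnum : numTwos P = T.card := rfl
  have hle2 := aux_le2 P h6
  have hmemT : ∀ t : Fin J × Fin L, t ∈ T ↔ P t.1 t.2 = 2 := by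
    intro t; simp [hT]
  -- distinct elements of T have distinct rows and distinct columns
  have hsnd : ∀ t ∈ T, ∀ t' ∈ T, t ≠ t' → t.2 ≠ t'.2 := by
    intro t ht t' ht' hne heq
    have h1 := (hmemT t).1 ht
    have h2 := (hmemT t').1 ht'
    have hfst : t.1 ≠ t'.1 := by
      intro hf; exact hne (Prod.ext hf heq)
    exact aux_col P h8 t.1 t'.1 t.2 hfst (by omega) (by rw [heq]; omega)
  have hfst : ∀ t ∈ T, ∀ t' ∈ T, t ≠ t' → t.1 ≠ t'.1 := by
    intro t ht t' ht' hne heq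
    have h1 := (hmemT t).1 ht
    have h2 := (hmemT t').1 ht'
    exact aux_row P h8 t.1 t.2 t'.2 (hsnd t ht t' ht' hne) (by omega) (by rw [heq]; omega)
  -- the set of rows with a 1 in the column of a 2
  set S : Fin J × Fin L → Finset (Fin J) :=
    fun t => (Finset.univ.erase t.1).filter (fun j' => P j' t.2 = 1) with hS
  have hmemS : ∀ t, ∀ j', j' ∈ S t ↔ (j' ≠ t.1 ∧ P j' t.2 = 1) := by
    intro t j'; simp [hS]
  have hScard : ∀ t ∈ T, (S t).card = dv - 2 := by
    intro t ht
    have ht2 := (hmemT t).1 ht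
    have hcolsum := hreg.1 t.2
    have hkey : ∑ j ∈ Finset.univ.erase t.1, P j t.2 + P t.1 t.2 = dv := by
      rw [Finset.sum_erase_add _ _ (Finset.mem_univ t.1)]; exact hcolsum
    have hone : ∀ j ∈ Finset.univ.erase t.1, P j t.2 ≤ 1 := by
      intro j hj
      by_contra hc
      exact aux_col P h8 j t.1 t.2 (Finset.ne_of_mem_erase hj) (by omega) (by omega)
    have hsum : ∑ j ∈ Finset.univ.erase t.1, P j t.2 = (S t).card := by
      rw [hS]
      rw [Finset.card_filter]
      refine Finset.sum_congr rfl ?_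
      intro j hj
      have := hone j hj
      split <;> omega
    omega
  -- rows with a 1 in the column of a 2 contain no 2
  classical
  set N : Finset (Fin J) := Finset.univ.filter (fun j => ∀ l, P j l ≠ 2) with hN
  have hSN : ∀ t ∈ T, S t ⊆ N := by
    intro t ht j' hj'
    obtain ⟨hne, h1⟩ := (hmemS t j').1 hj'
    simp only [hN, Finset.mem_filter, Finset.mem_univ, true_and]
    intro l' hl'
    have ht2 := (hmemT t).1 ht
    have hll : t.2 ≠ l' := by intro h; rw [h] at h1; omega
    exact aux_12a P h12a t.1 j' t.2 l' (Ne.symm hne) hll (by omega) (by omega) (by omega)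
  -- cardinality of N
  have hNcard : N.card = J - numTwos P := by
    have hcompl : N = (T.image Prod.fst)ᶜ := by
      ext j
      simp only [hN, Finset.mem_filter, Finset.mem_univ, true_and, Finset.mem_compl,
        Finset.mem_image, hT, Prod.exists]
      constructor
      · rintro h ⟨a, b, hab, rfl⟩
        exact h b hab
      · intro h l hl
        exact h ⟨j, l, hl, rfl⟩
    have himg : (T.image Prod.fst).card = T.card :=
      Finset.card_image_of_injOn (fun t ht t' ht' h => by
        by_contra hne
        exact hfst t ht t' ht' hne h)
    rw [hcompl, Finset.card_compl, himg, Fintype.card_fin, hnum]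
  constructor
  · -- first inequality, via pairs of rows
    set A : Fin J × Fin L → Finset (Finset (Fin J)) :=
      fun t => (S t).powersetCard 2 with hA
    have hdisj : ∀ t ∈ T, ∀ t' ∈ T, t ≠ t' → Disjoint (A t) (A t') := by
      intro t ht t' ht' hne
      rw [Finset.disjoint_left]
      intro s hs hs'
      rw [hA, Finset.mem_powersetCard] at hs hs'
      obtain ⟨j1, j2, hj12, hseq⟩ := Finset.card_eq_two.1 hs.2
      have hj1 : j1 ∈ S t := hs.1 (by rw [hseq]; simp)
      have hj2 : j2 ∈ S t := hs.1 (by rw [hseq]; simp)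
      have hj1' : j1 ∈ S t' := hs'.1 (by rw [hseq]; simp)
      have hj2' : j2 ∈ S t' := hs'.1 (by rw [hseq]; simp)
      rw [hmemS] at hj1 hj2 hj1' hj2'
      have ht2 := (hmemT t).1 ht
      exact aux_12b P h12b t.1 j1 j2 t.2 t'.2 (Ne.symm hj1.1) (Ne.symm hj2.1) hj12
        (hsnd t ht t' ht' hne) (by omega) (by omega) (by omega) (by omega) (by omega)
    have hAc : ∀ t ∈ T, (A t).card = Nat.choose (dv - 2) 2 := by
      intro t ht
      show ((S t).powersetCard 2).card = Nat.choose (dv - 2) 2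
      rw [Finset.card_powersetCard, hScard t ht]
    have hcard : (T.biUnion A).card = numTwos P * Nat.choose (dv - 2) 2 := by
      rw [Finset.card_biUnion hdisj, hnum, Finset.sum_congr rfl hAc,
        Finset.sum_const, smul_eq_mul]
    have hsub : T.biUnion A ⊆ N.powersetCard 2 := by
      intro s hs
      obtain ⟨t, ht, hst⟩ := Finset.mem_biUnion.1 hs
      rw [hA, Finset.mem_powersetCard] at hst
      exact Finset.mem_powersetCard.2 ⟨hst.1.trans (hSN t ht), hst.2⟩
    have := Finset.card_le_card hsub
    rw [hcard, Finset.card_powersetCard, hNcard] at this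
    exact this
  · -- second inequality, via counting ones
    set U : Finset (Fin J × Fin L) :=
      T.biUnion (fun t => (S t).image (fun j' => (j', t.2))) with hU
    have hUdisj : ∀ t ∈ T, ∀ t' ∈ T, t ≠ t' →
        Disjoint ((S t).image (fun j' => (j', t.2)))
          ((S t').image (fun j' => (j', t'.2))) := by
      intro t ht t' ht' hne
      rw [Finset.disjoint_left]
      intro p hp hp'
      obtain ⟨a, _, rfl⟩ := Finset.mem_image.1 hp
      obtain ⟨b, _, hb⟩ := Finset.mem_image.1 hp'
      exact hsnd t ht t' ht' hne (by rw [← (Prod.ext_iff.1 hb).2])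
    have hUc : ∀ t ∈ T, ((S t).image (fun j' => (j', t.2))).card = dv - 2 := by
      intro t ht
      rw [Finset.card_image_of_injective _ (fun a b h => (Prod.ext_iff.1 h).1),
        hScard t ht]
    have hUcard : U.card = numTwos P * (dv - 2) := by
      rw [hU, Finset.card_biUnion hUdisj, hnum, Finset.sum_congr rfl hUc,
        Finset.sum_const, smul_eq_mul]
    have hUone : ∀ p ∈ U, 1 ≤ P p.1 p.2 := by
      intro p hp
      obtain ⟨t, ht, hpt⟩ := Finset.mem_biUnion.1 hp
      obtain ⟨a, ha, rfl⟩ := Finset.mem_image.1 hpt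
      have := ((hmemS t a).1 ha).2
      simpa using by omega
    have hUsub : U ⊆ N ×ˢ Finset.univ := by
      intro p hp
      obtain ⟨t, ht, hpt⟩ := Finset.mem_biUnion.1 hp
      obtain ⟨a, ha, rfl⟩ := Finset.mem_image.1 hpt
      exact Finset.mem_product.2 ⟨hSN t ht ha, Finset.mem_univ _⟩
    calc numTwos P * (dv - 2) = U.card := hUcard.symm
      _ = ∑ _p ∈ U, 1 := by rw [Finset.sum_const, smul_eq_mul, mul_one]
      _ ≤ ∑ p ∈ U, P p.1 p.2 := Finset.sum_le_sum hUone
      _ ≤ ∑ p ∈ N ×ˢ Finset.univ, P p.1 p.2 :=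
          Finset.sum_le_sum_of_subset hUsub
      _ = ∑ j ∈ N, ∑ l, P j l := by rw [Finset.sum_product]
      _ = ∑ _j ∈ N, dc := Finset.sum_congr rfl (fun j _ => hreg.2 j)
      _ = N.card * dc := by rw [Finset.sum_const, smul_eq_mul]
      _ = (J - numTwos P) * dc := by rw [hNcard]
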